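/- Let G = H ⋊_ψ ℤ where H is a finitely generated group and ψ ∈ Aut(H) induces an automorphism ψ* of H¹(H,ℝ) with no eigenvalue of modulus one (and H¹(H,ℝ) ≠ 0). Then every torsion-free nilpotent quotient of G is cyclic (isomorphic to a quotient of ℤ = G/H); in particular, the image of H in any torsion-free nilpotent quotient of G is trivial. -/

import Mathlib

open Subgroup
open scoped commutatorElement

section StmtAux

lemma fg_comm_torsion_of_no_real_char {P : Type*} [Group P] [Group.FG P]
    (hc : ∀ a b : P, a * b = b * a)
    (hchar : ∀ χ : P →* Multiplicative ℝ, χ = 1) (p : P) : IsOfFinOrder p := by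
  by_contra hp
  letI : CommGroup P := { (inferInstance : Group P) with mul_comm := hc }
  haveI : Module.Finite ℤ (Additive P) := Module.Finite.iff_addGroup_fg.mpr inferInstance
  set A := Additive P
  set T := Submodule.torsion ℤ A with hT
  haveI : Module.Finite ℤ (A ⧸ T) := Module.Finite.quotient ℤ T
  have hpT : (Additive.ofMul p : A) ∉ T := by
    intro hmem
    rw [Submodule.mem_torsion_iff] at hmem
    obtain ⟨a, ha⟩ := hmem
    apply hp
    rw [← isOfFinAddOrder_ofMul_iff]
    rw [isOfFinAddOrder_iff_zsmul_eq_zero]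
    exact ⟨(a : ℤ), nonZeroDivisors.coe_ne_zero a, ha⟩
  have hx : T.mkQ (Additive.ofMul p) ≠ 0 := by
    simpa [Submodule.Quotient.mk_eq_zero] using hpT
  let b := Module.Free.chooseBasis ℤ (A ⧸ T)
  have hrepr : b.repr (T.mkQ (Additive.ofMul p)) ≠ 0 := by
    simpa using (b.repr.map_ne_zero_iff).mpr hx
  obtain ⟨i, hi⟩ : ∃ i, b.repr (T.mkQ (Additive.ofMul p)) i ≠ 0 := by
    by_contra hall
    push_neg at hall
    exact hrepr (Finsupp.ext hall)
  let χ : P →* Multiplicative ℝ :=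
  { toFun := fun q => Multiplicative.ofAdd ((b.coord i (T.mkQ (Additive.ofMul q)) : ℤ) : ℝ)
    map_one' := by simp
    map_mul' := by
      intro x y
      have : (Additive.ofMul (x * y) : A) = Additive.ofMul x + Additive.ofMul y := rfl
      simp [this, ← ofAdd_add] }
  have := congrArg (fun g => g p) (hchar χ)
  simp only [MonoidHom.one_apply, χ] at this
  have h0 : ((b.coord i (T.mkQ (Additive.ofMul p)) : ℤ) : ℝ) = 0 := by
    have := congrArg Multiplicative.toAdd this
    simpa using this
  rw [Int.cast_eq_zero] at h0
  exact hi (by simpa [Module.Basis.coord_apply] using h0)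


variable {N : Type*} [Group N]

/-- Iterated commutator chain `M, ⁅M,N⁆, ⁅⁅M,N⁆,N⁆, ...`. -/
def stmt10Chain (M : Subgroup N) : ℕ → Subgroup N
  | 0 => M
  | k + 1 => ⁅stmt10Chain M k, ⊤⁆

lemma stmt10Chain_normal (M : Subgroup N) [hM : M.Normal] : ∀ k, (stmt10Chain M k).Normal
  | 0 => hM
  | k + 1 => by
    haveI := stmt10Chain_normal M k
    exact Subgroup.commutator_normal _ _

lemma stmt10Chain_le_lcs (M : Subgroup N) : ∀ k, stmt10Chain M k ≤ (⊤ : Subgroup N).lowerCentralSeries k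
  | 0 => le_top
  | k + 1 => Subgroup.commutator_mono (stmt10Chain_le_lcs M k) le_rfl

lemma stmt10_comm_pow {Q : Type*} [Group Q] (a b : Q) (h : Commute a ⁅a, b⁆) :
    ∀ e : ℕ, ⁅a ^ e, b⁆ = ⁅a, b⁆ ^ e := by
  intro e
  induction e with
  | zero => simp
  | succ e ih =>
    have key : ⁅a ^ (e + 1), b⁆ = a * ⁅a ^ e, b⁆ * a⁻¹ * ⁅a, b⁆ := by
      simp only [commutatorElement_def, pow_succ']
      group
    have hc : Commute a (⁅a, b⁆ ^ e) := h.pow_right e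
    rw [key, ih, pow_succ, hc.eq]
    group

lemma stmt10Chain_descend (M : Subgroup N) [hM : M.Normal]
    (hbase : ∀ x ∈ M, ∃ e : ℕ, 0 < e ∧ x ^ e ∈ stmt10Chain M 1) :
    ∀ k, ∀ x ∈ stmt10Chain M k, ∃ e : ℕ, 0 < e ∧ x ^ e ∈ stmt10Chain M (k + 1) := by
  intro k
  induction k with
  | zero => exact hbase
  | succ k ih =>
    haveI : (stmt10Chain M (k + 2)).Normal := stmt10Chain_normal M (k + 2)
    set Ck2 := stmt10Chain M (k + 2) with hCk2
    let π := QuotientGroup.mk' Ck2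
    have hker : ∀ y : N, π y = 1 ↔ y ∈ Ck2 := fun y => QuotientGroup.eq_one_iff y
    have hmemc : ∀ y ∈ stmt10Chain M (k+1), ∀ g : N, ⁅y, g⁆ ∈ Ck2 := fun y hy g =>
      commutator_mem_commutator hy (mem_top g)
    let T : Subgroup N :=
    { carrier := {x | x ∈ stmt10Chain M (k + 1) ∧ ∃ e : ℕ, 0 < e ∧ x ^ e ∈ Ck2}
      one_mem' := ⟨one_mem _, 1, one_pos, by simpa using one_mem Ck2⟩
      inv_mem' := by
        rintro x ⟨hx, e, he, hxe⟩
        exact ⟨inv_mem hx, e, he, by rw [inv_pow]; exact inv_mem hxe⟩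
      mul_mem' := by
        rintro x y ⟨hx, e, he, hxe⟩ ⟨hy, d, hd, hyd⟩
        refine ⟨mul_mem hx hy, e * d, Nat.mul_pos he hd, ?_⟩
        have hcomm : Commute (π x) (π y) := by
          rw [← commutatorElement_eq_one_iff_commute, ← map_commutatorElement]
          exact (hker _).mpr (hmemc x hx y)
        have hx1 : (π x) ^ (e * d) = 1 := by
          rw [pow_mul, ← map_pow, (hker _).mpr hxe, one_pow]
        have hy1 : (π y) ^ (e * d) = 1 := by
          rw [mul_comm e d, pow_mul, ← map_pow, (hker _).mpr hyd, one_pow]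
        rw [← hker]
        rw [map_pow, map_mul, hcomm.mul_pow, hx1, hy1, one_mul] }
    have hle : stmt10Chain M (k + 1) ≤ T := by
      show (⁅stmt10Chain M k, ⊤⁆ : Subgroup N) ≤ T
      rw [commutator_le]
      intro g₁ hg₁ g₂ _
      refine ⟨commutator_mem_commutator hg₁ (mem_top g₂), ?_⟩
      obtain ⟨e, he, hge⟩ := ih g₁ hg₁
      refine ⟨e, he, ?_⟩
      have hcomm : Commute (π g₁) ⁅π g₁, π g₂⁆ := by
        rw [← commutatorElement_eq_one_iff_commute, ← map_commutatorElement,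
          ← map_commutatorElement]
        refine (hker _).mpr ?_
        have h2 : (⁅g₁, ⁅g₁, g₂⁆⁆ : N) ∈ ⁅(⊤ : Subgroup N), stmt10Chain M (k+1)⁆ :=
          commutator_mem_commutator (mem_top g₁)
            (commutator_mem_commutator hg₁ (mem_top g₂))
        rwa [Subgroup.commutator_comm] at h2
      rw [← hker, map_pow, map_commutatorElement, ← stmt10_comm_pow _ _ hcomm e,
        ← map_pow, ← map_commutatorElement, hker]
      exact commutator_mem_commutator hge (mem_top g₂)
    intro x hx
    exact (hle hx).2

lemma stmt10Chain_torsion (M : Subgroup N) [hM : M.Normal] (hnilp : Group.IsNilpotent N)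
    (hbase : ∀ x ∈ M, ∃ e : ℕ, 0 < e ∧ x ^ e ∈ stmt10Chain M 1) :
    ∀ x ∈ M, IsOfFinOrder x := by
  intro x hx
  obtain ⟨n, hn⟩ := _root_.nilpotent_iff_lowerCentralSeries.mp hnilp
  have key : ∀ k : ℕ, ∃ e : ℕ, 0 < e ∧ x ^ e ∈ stmt10Chain M k := by
    intro k
    induction k with
    | zero => exact ⟨1, one_pos, by simpa [stmt10Chain] using hx⟩
    | succ k ih =>
      obtain ⟨e, he, hxe⟩ := ih
      obtain ⟨d, hd, hxd⟩ := stmt10Chain_descend M hbase k _ hxe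
      exact ⟨e * d, Nat.mul_pos he hd, by rwa [pow_mul]⟩
  obtain ⟨e, he, hxe⟩ := key n
  have : x ^ e = 1 := by
    have := stmt10Chain_le_lcs M n hxe
    rw [hn] at this
    simpa using this
  exact isOfFinOrder_iff_pow_eq_one.mpr ⟨e, he, this⟩

end StmtAux



set_option maxHeartbeats 1000000 in
theorem stmt10 (H : Type*) [Group H] [Group.FG H] (ψ : MulAut H)
    (hcoh : ∃ φ : H →* Multiplicative ℝ, φ ≠ 1)
    (hhyp : ∀ μ : ℂ, ‖μ‖ = 1 →
      ∀ φ : H →* Multiplicative ℂ,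
        (∀ h : H, Multiplicative.toAdd (φ (ψ h)) = μ * Multiplicative.toAdd (φ h)) →
        φ = 1)
    (N : Type*) [Group N] (hnilp : Group.IsNilpotent N)
    (htf : ∀ n : N, IsOfFinOrder n → n = 1)
    (f : (SemidirectProduct H (Multiplicative ℤ) (zpowersHom (MulAut H) ψ)) →* N)
    (hf : Function.Surjective f) :
    (∀ h : H, f (SemidirectProduct.inl h) = 1) ∧ IsCyclic N := by
  haveI hR : (SemidirectProduct.inl (φ := zpowersHom (MulAut H) ψ)).range.Normal := by
    rw [SemidirectProduct.range_inl_eq_ker_rightHom]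
    exact MonoidHom.normal_ker _
  set M : Subgroup N :=
      Subgroup.map f (SemidirectProduct.inl (φ := zpowersHom (MulAut H) ψ)).range with hMdef
  haveI hMn : M.Normal := Subgroup.Normal.map hR f hf
  haveI : (⁅M, (⊤ : Subgroup N)⁆).Normal := Subgroup.commutator_normal M ⊤
  set π := QuotientGroup.mk' ⁅M, (⊤ : Subgroup N)⁆ with hπ
  set θ : H →* N ⧸ ⁅M, (⊤ : Subgroup N)⁆ := π.comp (f.comp SemidirectProduct.inl) with hθ
  have hmemM : ∀ h : H, f (SemidirectProduct.inl h) ∈ M := fun h =>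
    ⟨SemidirectProduct.inl h, ⟨h, rfl⟩, rfl⟩
  have hker : ∀ y : N, π y = 1 ↔ y ∈ ⁅M, (⊤ : Subgroup N)⁆ := fun y =>
    QuotientGroup.eq_one_iff y
  -- images of H commute in the quotient
  have hcomm : ∀ h₁ h₂ : H, Commute (θ h₁) (θ h₂) := by
    intro h₁ h₂
    rw [← commutatorElement_eq_one_iff_commute]
    have : (⁅θ h₁, θ h₂⁆ : N ⧸ ⁅M, (⊤ : Subgroup N)⁆) =
        π ⁅f (SemidirectProduct.inl h₁), f (SemidirectProduct.inl h₂)⁆ := by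
      rw [map_commutatorElement]; rfl
    rw [this, hker]
    exact commutator_mem_commutator (hmemM h₁) (mem_top _)
  -- equivariance
  have hψeq : ∀ h : H, θ (ψ h) = θ h := by
    intro h
    have h1 : (SemidirectProduct.inl (ψ h) :
        SemidirectProduct H (Multiplicative ℤ) (zpowersHom (MulAut H) ψ)) =
        SemidirectProduct.inr (Multiplicative.ofAdd (1 : ℤ)) * SemidirectProduct.inl h *
          SemidirectProduct.inr (Multiplicative.ofAdd (1 : ℤ))⁻¹ := by
      have h2 := SemidirectProduct.inl_aut (φ := zpowersHom (MulAut H) ψ)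
        (Multiplicative.ofAdd (1 : ℤ)) h
      have h3 : (zpowersHom (MulAut H) ψ) (Multiplicative.ofAdd (1 : ℤ)) h = ψ h := by
        simp
      rwa [h3] at h2
    show π (f (SemidirectProduct.inl (ψ h))) = π (f (SemidirectProduct.inl h))
    rw [h1, map_mul, map_mul, map_inv, map_inv, map_mul, map_mul, map_inv]
    have hc : Commute (π (f (SemidirectProduct.inr (Multiplicative.ofAdd (1 : ℤ)))))
        (π (f (SemidirectProduct.inl h))) := by
      rw [← commutatorElement_eq_one_iff_commute, ← map_commutatorElement, hker]
      have h4 : (⁅f (SemidirectProduct.inr (Multiplicative.ofAdd (1 : ℤ))),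
          f (SemidirectProduct.inl h)⁆ : N) ∈ ⁅(⊤ : Subgroup N), M⁆ :=
        commutator_mem_commutator (mem_top _) (hmemM h)
      rwa [Subgroup.commutator_comm] at h4
    rw [hc.eq, mul_inv_cancel_right]
  -- all real characters of the image are trivial
  have hcP : ∀ a b : θ.range, a * b = b * a := by
    rintro ⟨a, h₁, rfl⟩ ⟨b, h₂, rfl⟩
    exact Subtype.ext (hcomm h₁ h₂)
  haveI : Group.FG θ.range := Group.fg_of_surjective θ.rangeRestrict_surjective
  have hchar : ∀ χ : θ.range →* Multiplicative ℝ, χ = 1 := by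
    intro χ
    set φr : H →* Multiplicative ℝ := χ.comp θ.rangeRestrict with hφr
    have hre : ∀ h : H, φr (ψ h) = φr h := by
      intro h
      have e1 : θ.rangeRestrict (ψ h) = θ.rangeRestrict h := Subtype.ext (hψeq h)
      show χ (θ.rangeRestrict (ψ h)) = χ (θ.rangeRestrict h)
      rw [e1]
    let j : Multiplicative ℝ →* Multiplicative ℂ :=
      AddMonoidHom.toMultiplicative (Complex.ofRealHom.toAddMonoidHom)
    have h1 : j.comp φr = 1 := by
      apply hhyp 1 (by simp)
      intro h
      show Multiplicative.toAdd (j (φr (ψ h))) = 1 * Multiplicative.toAdd (j (φr h))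
      rw [hre h, one_mul]
    have hφr1 : ∀ h : H, φr h = 1 := by
      intro h
      have h2 : j (φr h) = 1 := by
        have := congrArg (fun g => g h) h1
        simpa using this
      have h3 : ((Multiplicative.toAdd (φr h) : ℝ) : ℂ) = 0 := congrArg Multiplicative.toAdd h2
      rw [Complex.ofReal_eq_zero] at h3
      rw [← ofAdd_toAdd (φr h), h3, ofAdd_zero]
    ext b
    obtain ⟨h, rfl⟩ := θ.rangeRestrict_surjective b
    exact hφr1 h
  -- base step : every element of M has a power in ⁅M, ⊤⁆
  have hbase : ∀ x ∈ M, ∃ e : ℕ, 0 < e ∧ x ^ e ∈ stmt10Chain M 1 := by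
    rintro x ⟨y, ⟨h, rfl⟩, rfl⟩
    have hfin := fg_comm_torsion_of_no_real_char hcP hchar (θ.rangeRestrict h)
    obtain ⟨e, he, h1⟩ := isOfFinOrder_iff_pow_eq_one.mp hfin
    refine ⟨e, he, ?_⟩
    have h2 : θ h ^ e = 1 := by
      have h2' := congrArg Subtype.val h1
      rw [SubmonoidClass.coe_pow] at h2'
      simpa [MonoidHom.coe_rangeRestrict] using h2'
    have h3 : π (f (SemidirectProduct.inl h) ^ e) = 1 := by
      rw [map_pow]; exact h2
    show f (SemidirectProduct.inl h) ^ e ∈ (⁅stmt10Chain M 0, ⊤⁆ : Subgroup N)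
    exact (hker _).mp h3
  have htriv : ∀ h : H, f (SemidirectProduct.inl h) = 1 := fun h =>
    htf _ (stmt10Chain_torsion M hnilp hbase _ (hmemM h))
  refine ⟨htriv, ?_⟩
  have hsurj2 : Function.Surjective (f.comp SemidirectProduct.inr) := by
    intro n
    obtain ⟨g, rfl⟩ := hf n
    refine ⟨g.right, ?_⟩
    conv_rhs => rw [← SemidirectProduct.inl_left_mul_inr_right g]
    rw [map_mul, htriv g.left, one_mul]
    rfl
  exact isCyclic_of_surjective _ hsurj2
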